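/- Derivative of the trace of a matrix exponential along a path: let γ ↦ A(γ) be a continuously differentiable map from an open interval I ⊆ ℝ into the Hermitian n×n complex matrices. Then γ ↦ tr(exp(A(γ))) is differentiable on I with d/dγ tr(exp(A(γ))) = tr(exp(A(γ))·A'(γ)). Consequently, for β > 0, a fixed Hermitian matrix H, and a continuously differentiable path γ ↦ K(γ) of Hermitian matrices defined on a neighborhood of [0,1], one has ∫₀¹ [tr(e^{−β(H+K(γ))}·K'(γ)) / tr(e^{−β(H+K(γ))})] dγ = −β^{−1}·(log tr(e^{−β(H+K(1))}) − log tr(e^{−β(H+K(0))})). -/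

import Mathlib

set_option maxHeartbeats 1000000


open Matrix Kronecker ComplexOrder

/-- Logarithm of a matrix, defined via the spectral theorem for Hermitian matrices
(junk value `0` on non-Hermitian matrices).  Since `Real.log 0 = 0`, for a positive
semidefinite matrix this is the logarithm taken on the support, with the convention
`log 0 = 0` on the kernel. -/
noncomputable def mlog {n : Type*} [Fintype n] [DecidableEq n] (A : Matrix n n ℂ) :
    Matrix n n ℂ :=
  if hA : A.IsHermitian then
    (hA.eigenvectorUnitary : Matrix n n ℂ) *
      Matrix.diagonal (fun i => (Real.log (hA.eigenvalues i) : ℂ)) *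
      (star hA.eigenvectorUnitary : Matrix n n ℂ)
  else 0

/-- von Neumann entropy `S(ρ) = -tr(ρ log ρ)`. -/
noncomputable def vnEnt {n : Type*} [Fintype n] [DecidableEq n] (ρ : Matrix n n ℂ) : ℝ :=
  -(Matrix.trace (ρ * mlog ρ)).re

/-- Relative entropy `S(ζ₁|ζ₂) = tr(ζ₁ (log ζ₁ - log ζ₂))`. -/
noncomputable def relEnt {n : Type*} [Fintype n] [DecidableEq n] (ζ₁ ζ₂ : Matrix n n ℂ) : ℝ :=
  (Matrix.trace (ζ₁ * (mlog ζ₁ - mlog ζ₂))).re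

/-- A density matrix: positive semidefinite with unit trace. -/
def IsDensityMatrix {n : Type*} [Fintype n] [DecidableEq n] (ρ : Matrix n n ℂ) : Prop :=
  ρ.PosSemidef ∧ ρ.trace = 1

/-- Partial trace over the reservoir (second) factor:
`(tr_R M)_{ij} = Σ_k M_{(i,k),(j,k)}`. -/
noncomputable def ptraceR {dS dR : ℕ} (M : Matrix (Fin dS × Fin dR) (Fin dS × Fin dR) ℂ) :
    Matrix (Fin dS) (Fin dS) ℂ :=
  Matrix.of fun i j => ∑ k, M (i, k) (j, k)

/-- Partial trace over the system (first) factor: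
`(tr_S M)_{kl} = Σ_i M_{(i,k),(i,l)}`. -/
noncomputable def ptraceS {dS dR : ℕ} (M : Matrix (Fin dS × Fin dR) (Fin dS × Fin dR) ℂ) :
    Matrix (Fin dR) (Fin dR) ℂ :=
  Matrix.of fun k l => ∑ i, M (i, k) (i, l)

/-- The Gibbs state `e^{-βH}/tr(e^{-βH})` at inverse temperature `β`. -/
noncomputable def gibbs {dR : ℕ} (β : ℝ) (H : Matrix (Fin dR) (Fin dR) ℂ) :
    Matrix (Fin dR) (Fin dR) ℂ :=
  (Matrix.trace (NormedSpace.exp ((-β : ℂ) • H)))⁻¹ • NormedSpace.exp ((-β : ℂ) • H)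

/-- The trace norm `‖X‖₁ = tr((X*X)^{1/2})`. -/
noncomputable def traceNorm {n : Type*} [Fintype n] [DecidableEq n] (X : Matrix n n ℂ) : ℝ :=
  (Matrix.trace ((Matrix.posSemidef_conjTranspose_mul_self X).1.eigenvectorUnitary.1 *
    Matrix.diagonal (fun i => ((√((Matrix.posSemidef_conjTranspose_mul_self X).1.eigenvalues i) : ℝ) : ℂ)) *
    (star (Matrix.posSemidef_conjTranspose_mul_self X).1.eigenvectorUnitary : Matrix n n ℂ))).re


section Helpers

variable {N : ℕ}

private lemma hasDerivAt_matrix_mul {M L : ℝ → Matrix (Fin N) (Fin N) ℂ}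
    {M' L' : Matrix (Fin N) (Fin N) ℂ} {γ : ℝ}
    (hM : ∀ i j, HasDerivAt (fun s => M s i j) (M' i j) γ)
    (hL : ∀ i j, HasDerivAt (fun s => L s i j) (L' i j) γ) :
    ∀ i j, HasDerivAt (fun s => (M s * L s) i j) ((M' * L γ + M γ * L') i j) γ := by
  intro i j
  simp only [Matrix.mul_apply, Matrix.add_apply]
  rw [← Finset.sum_add_distrib]
  exact HasDerivAt.fun_sum fun l _ => (hM i l).mul (hL l j)

private lemma hasDerivAt_matrix_pow {A : ℝ → Matrix (Fin N) (Fin N) ℂ}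
    {A' : Matrix (Fin N) (Fin N) ℂ} {γ : ℝ}
    (hA : ∀ i j, HasDerivAt (fun s => A s i j) (A' i j) γ) (k : ℕ) :
    ∀ i j, HasDerivAt (fun s => (A s ^ k) i j)
      ((∑ m ∈ Finset.range k, A γ ^ m * A' * A γ ^ (k - 1 - m)) i j) γ := by
  induction k with
  | zero =>
    intro i j
    simp only [pow_zero, Finset.range_zero, Finset.sum_empty, Matrix.zero_apply]
    exact hasDerivAt_const γ _
  | succ k ih =>
    intro i j
    have h := hasDerivAt_matrix_mul (M := fun s => A s ^ k) (L := A) ih hA i j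
    simp only [← pow_succ] at h
    have key : (∑ m ∈ Finset.range (k + 1), A γ ^ m * A' * A γ ^ (k + 1 - 1 - m))
        = (∑ m ∈ Finset.range k, A γ ^ m * A' * A γ ^ (k - 1 - m)) * A γ + A γ ^ k * A' := by
      rw [Finset.sum_range_succ, Finset.sum_mul]
      congr 1
      · refine Finset.sum_congr rfl fun m hm => ?_
        rw [Finset.mem_range] at hm
        have he : k + 1 - 1 - m = (k - 1 - m) + 1 := by omega
        rw [he, pow_succ, ← mul_assoc]
      · have : k + 1 - 1 - k = 0 := by omega
        rw [this, pow_zero, mul_one]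
    rw [key]
    exact h

private lemma hasDerivAt_trace_pow {A : ℝ → Matrix (Fin N) (Fin N) ℂ}
    {A' : Matrix (Fin N) (Fin N) ℂ} {γ : ℝ}
    (hA : ∀ i j, HasDerivAt (fun s => A s i j) (A' i j) γ) (k : ℕ) :
    HasDerivAt (fun s => Matrix.trace (A s ^ (k + 1)))
      (((k : ℂ) + 1) * Matrix.trace (A γ ^ k * A')) γ := by
  have h : HasDerivAt (fun s => ∑ i, (A s ^ (k + 1)) i i)
      (∑ i, (∑ m ∈ Finset.range (k + 1), A γ ^ m * A' * A γ ^ (k + 1 - 1 - m)) i i) γ :=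
    HasDerivAt.fun_sum fun i _ => hasDerivAt_matrix_pow hA (k + 1) i i
  have e1 : (fun s => Matrix.trace (A s ^ (k + 1))) = fun s => ∑ i, (A s ^ (k + 1)) i i := by
    funext s; rfl
  have e2 : (∑ i, (∑ m ∈ Finset.range (k + 1), A γ ^ m * A' * A γ ^ (k + 1 - 1 - m)) i i)
      = ((k : ℂ) + 1) * Matrix.trace (A γ ^ k * A') := by
    have : (∑ i, (∑ m ∈ Finset.range (k + 1), A γ ^ m * A' * A γ ^ (k + 1 - 1 - m)) i i)
        = Matrix.trace (∑ m ∈ Finset.range (k + 1), A γ ^ m * A' * A γ ^ (k + 1 - 1 - m)) := rfl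
    rw [this, Matrix.trace_sum]
    have hterm : ∀ m ∈ Finset.range (k + 1),
        Matrix.trace (A γ ^ m * A' * A γ ^ (k + 1 - 1 - m)) = Matrix.trace (A γ ^ k * A') := by
      intro m hm
      rw [Finset.mem_range] at hm
      rw [Matrix.trace_mul_comm, ← mul_assoc, ← pow_add]
      have he : k + 1 - 1 - m + m = k := by omega
      rw [he]
    rw [Finset.sum_congr rfl hterm, Finset.sum_const, Finset.card_range, nsmul_eq_mul]
    push_cast
    ring
  rw [e1, ← e2]
  exact h

end Helpers

variable {N : ℕ}

private lemma hasSum_trace_exp_mul' (M B : Matrix (Fin N) (Fin N) ℂ) :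
    HasSum (fun k : ℕ => ((k.factorial : ℂ))⁻¹ * Matrix.trace (M ^ k * B))
      (Matrix.trace (NormedSpace.exp M * B)) := by
  letI : SeminormedRing (Matrix (Fin N) (Fin N) ℂ) := Matrix.linftyOpSemiNormedRing
  letI : NormedRing (Matrix (Fin N) (Fin N) ℂ) := Matrix.linftyOpNormedRing
  letI : NormedAlgebra ℂ (Matrix (Fin N) (Fin N) ℂ) := Matrix.linftyOpNormedAlgebra
  have h := NormedSpace.exp_series_hasSum_exp' (𝕂 := ℂ) M
  have hcont : Continuous fun X : Matrix (Fin N) (Fin N) ℂ => Matrix.trace (X * B) :=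
    (Continuous.matrix_mul continuous_id continuous_const).matrix_trace
  have h2 := h.map (Matrix.traceAddMonoidHom (Fin N) ℂ |>.comp
    (AddMonoidHom.mulRight B)) hcont
  simp only [AddMonoidHom.comp_apply, AddMonoidHom.mulRight_apply,
    Matrix.traceAddMonoidHom_apply] at h2
  convert h2 using 2 with k
  simp [Function.comp, smul_mul_assoc, Matrix.trace_smul, smul_eq_mul]
  rfl

private lemma entry_pow_bound' {M : Matrix (Fin N) (Fin N) ℂ} {R : ℝ}
    (h : ∀ i j, ‖M i j‖ ≤ R) (k : ℕ) :
    ∀ i j, ‖(M ^ k) i j‖ ≤ ((N : ℝ) * (R + 1)) ^ k := by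
  induction k with
  | zero =>
    intro i j
    by_cases hij : i = j <;> simp [pow_zero, Matrix.one_apply, hij]
  | succ k ih =>
    intro i j
    have hR : 0 ≤ R := le_trans (norm_nonneg _) (h i i)
    have hQ : (0:ℝ) ≤ (N : ℝ) * (R + 1) := by positivity
    rw [pow_succ, Matrix.mul_apply]
    calc ‖∑ l, (M ^ k) i l * M l j‖ ≤ ∑ l, ‖(M ^ k) i l‖ * ‖M l j‖ := by
          refine (norm_sum_le _ _).trans ?_
          refine Finset.sum_le_sum fun l _ => ?_
          rw [norm_mul]
      _ ≤ ∑ _l : Fin N, ((N:ℝ)*(R+1))^k * R :=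
          Finset.sum_le_sum fun l _ =>
            mul_le_mul (ih i l) (h l j) (norm_nonneg _) (pow_nonneg hQ _)
      _ = (N:ℝ) * (((N:ℝ)*(R+1))^k * R) := by
          simp [Finset.sum_const, Finset.card_univ, nsmul_eq_mul]
      _ ≤ ((N:ℝ)*(R+1))^(k+1) := by
          rw [pow_succ]
          nlinarith [pow_nonneg hQ k, hR, Nat.cast_nonneg (α := ℝ) N]

private lemma trace_exp_hasDerivAt {I : Set ℝ} (hI : IsOpen I)
    {A A' : ℝ → Matrix (Fin N) (Fin N) ℂ}
    (hAd : ∀ γ ∈ I, ∀ i j, HasDerivAt (fun s => A s i j) (A' γ i j) γ)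
    (hAc : ContinuousOn A' I) {γ : ℝ} (hγ : γ ∈ I) :
    HasDerivAt (fun s => Matrix.trace (NormedSpace.exp (A s)))
      (Matrix.trace (NormedSpace.exp (A γ) * A' γ)) γ := by
  classical
  set a : ℝ → (Fin N × Fin N) → ℂ := fun s p => A s p.1 p.2 with ha
  set a' : ℝ → (Fin N × Fin N) → ℂ := fun s p => A' s p.1 p.2 with ha'
  have hcA : ContinuousAt a γ :=
    continuousAt_pi.mpr fun p => (hAd γ hγ p.1 p.2).continuousAt
  have hcA' : ContinuousAt a' γ := by
    have h1 : ContinuousAt A' γ := hAc.continuousAt (hI.mem_nhds hγ)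
    exact continuousAt_pi.mpr fun p =>
      (show Continuous fun M : Matrix (Fin N) (Fin N) ℂ => M p.1 p.2 from
        (continuous_apply p.2).comp (continuous_apply p.1)).continuousAt.comp h1
  set R : ℝ := ‖a γ‖ + 1 with hRdef
  set C : ℝ := ‖a' γ‖ + 1 with hCdef
  have hRev : ∀ᶠ y in nhds γ, ‖a y‖ < R :=
    Filter.Tendsto.eventually_lt_const (lt_add_one _) hcA.norm
  have hCev : ∀ᶠ y in nhds γ, ‖a' y‖ < C :=
    Filter.Tendsto.eventually_lt_const (lt_add_one _) hcA'.norm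
  have hIev : ∀ᶠ y in nhds γ, y ∈ I := hI.eventually_mem hγ
  obtain ⟨ε, hε, hball⟩ := Metric.eventually_nhds_iff_ball.mp (hRev.and (hCev.and hIev))
  have hC0 : (0:ℝ) ≤ C := by positivity
  set Q : ℝ := (N:ℝ) * (R + 1) with hQdef
  have hQ0 : (0:ℝ) ≤ Q := by positivity
  set u : ℕ → ℝ := fun k => (N:ℝ)^2 * C * (Q ^ k / k.factorial) with hu_def
  have hu : Summable u := (Real.summable_pow_div_factorial Q).mul_left _
  set g : ℕ → ℝ → ℂ := fun k y => (((k+1).factorial : ℂ))⁻¹ * Matrix.trace (A y ^ (k+1)) with hgdef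
  set g' : ℕ → ℝ → ℂ := fun k y => ((k.factorial : ℂ))⁻¹ * Matrix.trace (A y ^ k * A' y) with hg'def
  have hentryA : ∀ y ∈ Metric.ball γ ε, ∀ i j : Fin N, ‖A y i j‖ ≤ R := by
    intro y hy i j
    exact le_of_lt (lt_of_le_of_lt (norm_le_pi_norm (a y) (i, j)) (hball y hy).1)
  have hentryA' : ∀ y ∈ Metric.ball γ ε, ∀ i j : Fin N, ‖A' y i j‖ ≤ C := by
    intro y hy i j
    exact le_of_lt (lt_of_le_of_lt (norm_le_pi_norm (a' y) (i, j)) (hball y hy).2.1)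
  have hg : ∀ (k : ℕ), ∀ y, y ∈ Metric.ball γ ε → HasDerivAt (g k) (g' k y) y := by
    intro k y hy
    have hyI : y ∈ I := (hball y hy).2.2
    have h := HasDerivAt.const_mul ((((k+1).factorial : ℂ))⁻¹)
      (hasDerivAt_trace_pow (hAd y hyI) k)
    have h1 : ((k.factorial : ℂ)) ≠ 0 := Nat.cast_ne_zero.mpr k.factorial_ne_zero
    have h2 : ((k:ℂ) + 1) ≠ 0 := by
      have := Nat.cast_add_one_ne_zero (R := ℂ) k
      exact_mod_cast this
    have hsc : (((k+1).factorial : ℂ))⁻¹ * ((k:ℂ)+1) = ((k.factorial : ℂ))⁻¹ := by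
      rw [Nat.factorial_succ]
      push_cast
      rw [mul_inv]
      field_simp
    refine h.congr_deriv ?_
    show _ = ((k.factorial : ℂ))⁻¹ * Matrix.trace (A y ^ k * A' y)
    rw [← hsc, mul_assoc]
  have hg' : ∀ (k : ℕ), ∀ y, y ∈ Metric.ball γ ε → ‖g' k y‖ ≤ u k := by
    intro k y hy
    have htr : ‖Matrix.trace (A y ^ k * A' y)‖ ≤ (N:ℝ) * ((N:ℝ) * (Q ^ k * C)) := by
      calc ‖Matrix.trace (A y ^ k * A' y)‖ = ‖∑ i, (A y ^ k * A' y) i i‖ := rfl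
        _ ≤ ∑ i, ‖(A y ^ k * A' y) i i‖ := norm_sum_le _ _
        _ ≤ ∑ _i : Fin N, ((N:ℝ) * (Q ^ k * C)) := by
            refine Finset.sum_le_sum fun i _ => ?_
            rw [Matrix.mul_apply]
            calc ‖∑ l, (A y ^ k) i l * A' y l i‖ ≤ ∑ l, ‖(A y ^ k) i l‖ * ‖A' y l i‖ := by
                  refine (norm_sum_le _ _).trans ?_
                  exact Finset.sum_le_sum fun l _ => le_of_eq (norm_mul _ _)
              _ ≤ ∑ _l : Fin N, Q ^ k * C := by
                  refine Finset.sum_le_sum fun l _ => ?_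
                  exact mul_le_mul (entry_pow_bound' (hentryA y hy) k i l)
                    (hentryA' y hy l i) (norm_nonneg _) (pow_nonneg hQ0 _)
              _ = (N:ℝ) * (Q ^ k * C) := by
                  simp [Finset.sum_const, Finset.card_univ, nsmul_eq_mul]
        _ = (N:ℝ) * ((N:ℝ) * (Q ^ k * C)) := by
            simp [Finset.sum_const, Finset.card_univ, nsmul_eq_mul]
    have hnorm : ‖g' k y‖ = ((k.factorial : ℝ))⁻¹ * ‖Matrix.trace (A y ^ k * A' y)‖ := by
      rw [hg'def]
      simp only [norm_mul, norm_inv]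
      congr 2
      simp
    rw [hnorm, hu_def]
    have hfac : (0:ℝ) ≤ ((k.factorial : ℝ))⁻¹ := by positivity
    calc ((k.factorial : ℝ))⁻¹ * ‖Matrix.trace (A y ^ k * A' y)‖
        ≤ ((k.factorial : ℝ))⁻¹ * ((N:ℝ) * ((N:ℝ) * (Q ^ k * C))) :=
          mul_le_mul_of_nonneg_left htr hfac
      _ = (N:ℝ)^2 * C * (Q ^ k / k.factorial) := by ring
  have hsum1 := (hasSum_trace_exp_mul' (A γ) (1 : Matrix (Fin N) (Fin N) ℂ)).summable
  have hg0 : Summable fun k => g k γ := by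
    have h2 := (summable_nat_add_iff 1).mpr hsum1
    simpa [hgdef, mul_one] using h2
  have hmain := hasDerivAt_tsum_of_isPreconnected hu Metric.isOpen_ball
    (convex_ball γ ε).isPreconnected hg hg' (Metric.mem_ball_self hε) hg0
    (Metric.mem_ball_self hε)
  have htsum_eq : ∀ z, Matrix.trace (NormedSpace.exp (A z)) = (N:ℂ) + ∑' k, g k z := by
    intro z
    have hS := hasSum_trace_exp_mul' (A z) (1 : Matrix (Fin N) (Fin N) ℂ)
    simp only [mul_one] at hS
    rw [← hS.tsum_eq, hS.summable.tsum_eq_zero_add]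
    congr 1
    · simp [Matrix.trace_one]
  have hfinal : (∑' k, g' k γ) = Matrix.trace (NormedSpace.exp (A γ) * A' γ) :=
    (hasSum_trace_exp_mul' (A γ) (A' γ)).tsum_eq
  have hfun : (fun s => Matrix.trace (NormedSpace.exp (A s)))
      = fun s => (N:ℂ) + ∑' k, g k s := funext htsum_eq
  rw [hfun, ← hfinal]
  exact ((hasDerivAt_const γ ((N:ℕ):ℂ)).add hmain).congr_deriv (zero_add _)


private lemma trace_exp_pos' {N : ℕ} (hN : 0 < N) {B : Matrix (Fin N) (Fin N) ℂ}
    (hB : B.IsHermitian) : 0 < (Matrix.trace (NormedSpace.exp B)).re := by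
  have hspec := hB.spectral_theorem
  set U : Matrix (Fin N) (Fin N) ℂ := (hB.eigenvectorUnitary : Matrix (Fin N) (Fin N) ℂ) with hU
  set D : Matrix (Fin N) (Fin N) ℂ :=
    Matrix.diagonal (RCLike.ofReal ∘ hB.eigenvalues) with hD
  have h1 : star U * U = 1 := Matrix.UnitaryGroup.star_mul_self hB.eigenvectorUnitary
  have h2 : U * star U = 1 := mul_eq_one_comm.mp h1
  have hUinv : U⁻¹ = star U := Matrix.inv_eq_left_inv h1
  have hUnit : IsUnit U := ⟨⟨U, star U, h2, h1⟩, rfl⟩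
  have hexp : NormedSpace.exp B = U * NormedSpace.exp D * star U := by
    rw [hspec, Unitary.conjStarAlgAut_apply, ← hU, ← hUinv, Matrix.exp_conj U D hUnit, hUinv]
  have htr : Matrix.trace (NormedSpace.exp B) = Matrix.trace (NormedSpace.exp D) := by
    rw [hexp, Matrix.trace_mul_comm (U * NormedSpace.exp D) (star U), ← mul_assoc, h1, one_mul]
  have hdiag : NormedSpace.exp D
      = Matrix.diagonal (fun i => Complex.exp ((hB.eigenvalues i : ℝ) : ℂ)) := by
    rw [hD, Matrix.exp_diagonal, Complex.exp_eq_exp_ℂ]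
    have he : NormedSpace.exp (RCLike.ofReal ∘ hB.eigenvalues)
        = fun i => NormedSpace.exp ((hB.eigenvalues i : ℝ) : ℂ) := by
      funext i
      exact Pi.coe_exp _ i
    rw [he]
  rw [htr, hdiag, Matrix.trace_diagonal]
  rw [Complex.re_sum]
  have : ∀ i : Fin N, (Complex.exp ((hB.eigenvalues i : ℝ) : ℂ)).re
      = Real.exp (hB.eigenvalues i) := fun i => Complex.exp_ofReal_re _
  simp only [this]
  have : Nonempty (Fin N) := Fin.pos_iff_nonempty.mp hN
  exact Finset.sum_pos (fun i _ => Real.exp_pos _) Finset.univ_nonempty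

private lemma hasDerivAt_re {f : ℝ → ℂ} {c : ℂ} {x : ℝ} (hf : HasDerivAt f c x) :
    HasDerivAt (fun s => (f s).re) c.re x := by
  have h := Complex.reCLM.hasFDerivAt.comp_hasDerivAt x hf
  exact h


/-- **Derivative of the trace of a matrix exponential along a path.**
If `γ ↦ A(γ)` is a continuously differentiable path of Hermitian matrices on an
open set `I` then `γ ↦ tr(exp(A(γ)))` is differentiable with derivative
`tr(exp(A(γ)) A'(γ))`.  Consequently, for `β > 0`, a fixed Hermitian `H`, and a
continuously differentiable path `γ ↦ K(γ)` of Hermitian matrices on an open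
neighborhood `J` of `[0,1]`, one has
`∫₀¹ tr(e^{-β(H+K(γ))} K'(γ))/tr(e^{-β(H+K(γ))}) dγ
  = -β⁻¹ (log tr(e^{-β(H+K(1))}) - log tr(e^{-β(H+K(0))}))`. -/
theorem trace_exp_deriv_and_integral {n : ℕ}
    {I : Set ℝ} (hI : IsOpen I)
    (A A' : ℝ → Matrix (Fin n) (Fin n) ℂ)
    (hA : ∀ γ ∈ I, (A γ).IsHermitian)
    (hAderiv : ∀ γ ∈ I, ∀ i j, HasDerivAt (fun s => A s i j) (A' γ i j) γ)
    (hAcont : ContinuousOn A' I)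
    (β : ℝ) (hβ : 0 < β)
    (H : Matrix (Fin n) (Fin n) ℂ) (hH : H.IsHermitian)
    {J : Set ℝ} (hJ : IsOpen J) (hJ01 : Set.Icc (0 : ℝ) 1 ⊆ J)
    (K K' : ℝ → Matrix (Fin n) (Fin n) ℂ)
    (hK : ∀ γ ∈ J, (K γ).IsHermitian)
    (hKderiv : ∀ γ ∈ J, ∀ i j, HasDerivAt (fun s => K s i j) (K' γ i j) γ)
    (hKcont : ContinuousOn K' J) :
    (∀ γ ∈ I, HasDerivAt (fun s => (Matrix.trace (NormedSpace.exp (A s))).re)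
        ((Matrix.trace (NormedSpace.exp (A γ) * A' γ)).re) γ) ∧
    ∫ γ in (0 : ℝ)..1,
        (Matrix.trace (NormedSpace.exp ((-β : ℂ) • (H + K γ)) * K' γ)).re /
          (Matrix.trace (NormedSpace.exp ((-β : ℂ) • (H + K γ)))).re
      = -β⁻¹ *
        (Real.log (Matrix.trace (NormedSpace.exp ((-β : ℂ) • (H + K 1)))).re
          - Real.log (Matrix.trace (NormedSpace.exp ((-β : ℂ) • (H + K 0)))).re) := by
  constructor
  · intro γ hγ
    exact hasDerivAt_re (trace_exp_hasDerivAt hI hAderiv hAcont hγ)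
  rcases Nat.eq_zero_or_pos n with hn | hn
  · subst hn
    have h0 : ∀ M : Matrix (Fin 0) (Fin 0) ℂ, Matrix.trace M = 0 := fun M =>
      Matrix.trace_eq_zero_of_isEmpty M
    simp [h0, Real.log_zero]
  -- main case
  set Am : ℝ → Matrix (Fin n) (Fin n) ℂ := fun s => (-β : ℂ) • (H + K s) with hAm
  set Am' : ℝ → Matrix (Fin n) (Fin n) ℂ := fun s => (-β : ℂ) • K' s with hAm'
  have hAmd : ∀ γ ∈ J, ∀ i j, HasDerivAt (fun s => Am s i j) (Am' γ i j) γ := by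
    intro γ hγ i j
    have h1 := (hKderiv γ hγ i j).const_add (H i j)
    have h2 := h1.const_mul ((-β : ℂ))
    have h3 : (fun s => Am s i j) = fun s => (-β : ℂ) * (H i j + K s i j) := by
      funext s
      simp [hAm, Matrix.smul_apply, Matrix.add_apply, smul_eq_mul, mul_add]
    have h4 : Am' γ i j = (-β : ℂ) * K' γ i j := by
      simp [hAm', Matrix.smul_apply, smul_eq_mul]
    rw [h3, h4]
    exact h2
  have hAmc : ContinuousOn Am' J := hKcont.const_smul ((-β : ℂ))
  have hherm : ∀ γ ∈ J, (Am γ).IsHermitian := by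
    intro γ hγ
    have h := hH.add (hK γ hγ)
    show ((-β : ℂ) • (H + K γ))ᴴ = (-β : ℂ) • (H + K γ)
    rw [Matrix.conjTranspose_smul, h]
    congr 1
    simp [Complex.ext_iff]
  have hpos : ∀ γ ∈ J, 0 < (Matrix.trace (NormedSpace.exp (Am γ))).re := fun γ hγ =>
    trace_exp_pos' hn (hherm γ hγ)
  have hD : ∀ γ ∈ J, HasDerivAt (fun s => (Matrix.trace (NormedSpace.exp (Am s))).re)
      (-β * (Matrix.trace (NormedSpace.exp (Am γ) * K' γ)).re) γ := by
    intro γ hγ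
    have h := hasDerivAt_re (trace_exp_hasDerivAt hJ hAmd hAmc hγ)
    convert h using 1
    rw [hAm']
    rw [Matrix.mul_smul, Matrix.trace_smul, smul_eq_mul]
    rw [show ((-β : ℂ)) = ((-β : ℝ) : ℂ) by push_cast; ring]
    rw [Complex.re_ofReal_mul]
  have h01 : Set.uIcc (0 : ℝ) 1 = Set.Icc (0 : ℝ) 1 := Set.uIcc_of_le (by norm_num)
  have hsub : Set.uIcc (0 : ℝ) 1 ⊆ J := by rw [h01]; exact hJ01
  have key : ∀ x ∈ Set.uIcc (0 : ℝ) 1,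
      HasDerivAt (fun γ => -β⁻¹ * Real.log ((Matrix.trace (NormedSpace.exp (Am γ))).re))
        ((Matrix.trace (NormedSpace.exp (Am x) * K' x)).re /
          (Matrix.trace (NormedSpace.exp (Am x))).re) x := by
    intro x hx
    have hxJ : x ∈ J := hsub hx
    have hgne : (Matrix.trace (NormedSpace.exp (Am x))).re ≠ 0 := ne_of_gt (hpos x hxJ)
    have hlog := (hD x hxJ).log hgne
    have h := hlog.const_mul (-β⁻¹)
    refine h.congr_deriv ?_
    have hβ0 : β ≠ 0 := ne_of_gt hβ
    rw [mul_div_assoc', ← mul_assoc, neg_mul_neg, inv_mul_cancel₀ hβ0, one_mul]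
  -- continuity of the integrand
  have hKcA : ∀ x ∈ J, ContinuousAt K x := by
    intro x hx
    exact continuousAt_pi.mpr fun i => continuousAt_pi.mpr fun j =>
      (hKderiv x hx i j).continuousAt
  have hAmC : ContinuousOn Am (Set.uIcc (0 : ℝ) 1) := by
    intro x hx
    have h2 : ContinuousAt (fun s => H + K s) x :=
      continuousAt_const.add (hKcA x (hsub hx))
    exact (h2.const_smul ((-β : ℂ))).continuousWithinAt
  have hexpC : ContinuousOn (fun x => NormedSpace.exp (Am x)) (Set.uIcc (0 : ℝ) 1) := by
    letI : SeminormedRing (Matrix (Fin n) (Fin n) ℂ) := Matrix.linftyOpSemiNormedRing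
    letI : NormedRing (Matrix (Fin n) (Fin n) ℂ) := Matrix.linftyOpNormedRing
    letI : NormedAlgebra ℂ (Matrix (Fin n) (Fin n) ℂ) := Matrix.linftyOpNormedAlgebra
    exact (continuous_iff_continuousAt.2 fun x => (NormedSpace.exp_analytic (𝕂 := ℂ) x).continuousAt).comp_continuousOn hAmC
  have hmulC : ContinuousOn (fun x => NormedSpace.exp (Am x) * K' x)
      (Set.uIcc (0 : ℝ) 1) := by
    have hpair := hexpC.prodMk (hKcont.mono hsub)
    have hmul : Continuous
        (fun p : Matrix (Fin n) (Fin n) ℂ × Matrix (Fin n) (Fin n) ℂ => p.1 * p.2) :=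
      Continuous.matrix_mul continuous_fst continuous_snd
    exact hmul.comp_continuousOn hpair
  have htrC : Continuous (fun M : Matrix (Fin n) (Fin n) ℂ => (Matrix.trace M).re) :=
    Complex.continuous_re.comp (Continuous.matrix_trace continuous_id)
  have hTc : ContinuousOn
      (fun x => (Matrix.trace (NormedSpace.exp (Am x) * K' x)).re) (Set.uIcc (0 : ℝ) 1) :=
    htrC.comp_continuousOn hmulC
  have hgc : ContinuousOn
      (fun x => (Matrix.trace (NormedSpace.exp (Am x))).re) (Set.uIcc (0 : ℝ) 1) :=
    htrC.comp_continuousOn hexpC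
  have hint : IntervalIntegrable
      (fun x => (Matrix.trace (NormedSpace.exp (Am x) * K' x)).re /
        (Matrix.trace (NormedSpace.exp (Am x))).re) MeasureTheory.volume 0 1 :=
    (hTc.div hgc fun x hx => ne_of_gt (hpos x (hsub hx))).intervalIntegrable
  have hFTC := intervalIntegral.integral_eq_sub_of_hasDerivAt key hint
  rw [hFTC]
  ring
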